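/- Let λ = σ_S''(R) + β·σ_S'(R) where σ_S(r) = [β/(β + R·P₀(R))]·(R^{1/2}/r^{1/2})·I_{1/2}(r)/I_{1/2}(R). Then λ = [β·P₀(R)/(β + R·P₀(R))]·[R²·P₁(R) + 1 + β·R], where P_n(ξ) = I_{n+3/2}(ξ)/(ξ·I_{n+1/2}(ξ)). -/

import Mathlib

/-- `sbI k x = I_{k - 1/2}(x)`, the modified Bessel function of the first kind of
half-integer order, defined from the elementary closed forms
`I_{-1/2}(x) = √(2/(πx)) cosh x`, `I_{1/2}(x) = √(2/(πx)) sinh x` and the recurrence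
`I_{ν+1}(x) = I_{ν-1}(x) - (2ν/x) I_ν(x)`. -/
noncomputable def sbI : ℕ → ℝ → ℝ
  | 0, x => Real.sqrt (2 / (Real.pi * x)) * Real.cosh x
  | 1, x => Real.sqrt (2 / (Real.pi * x)) * Real.sinh x
  | (k + 2), x => sbI k x - ((2 * (k : ℝ) + 1) / x) * sbI (k + 1) x

/-- `besselIhalf n x = I_{n+1/2}(x)`. -/
noncomputable def besselIhalf (n : ℕ) (x : ℝ) : ℝ := sbI (n + 1) x

/-- `P n ξ = I_{n+3/2}(ξ) / (ξ · I_{n+1/2}(ξ))`. -/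
noncomputable def P (n : ℕ) (ξ : ℝ) : ℝ := besselIhalf (n + 1) ξ / (ξ * besselIhalf n ξ)


/-- The radially symmetric stationary nutrient concentration
`σ_S(r) = [β/(β+R·P₀(R))]·(R^{1/2}/r^{1/2})·I_{1/2}(r)/I_{1/2}(R)`. -/
noncomputable def sigS (R β : ℝ) (r : ℝ) : ℝ :=
  β / (β + R * P 0 R) * (Real.sqrt R / Real.sqrt r) * (besselIhalf 0 r / besselIhalf 0 R)

private theorem sinh_lt_mul_cosh' (x : ℝ) (hx : 0 < x) : Real.sinh x < x * Real.cosh x := by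
  have hmono : StrictMonoOn (fun y => y * Real.cosh y - Real.sinh y) (Set.Ici 0) := by
    apply strictMonoOn_of_deriv_pos (convex_Ici 0) (by fun_prop)
    intro y hy
    rw [interior_Ici] at hy
    have hd : HasDerivAt (fun y => y * Real.cosh y - Real.sinh y) (y * Real.sinh y) y := by
      have := ((hasDerivAt_id y).mul (Real.hasDerivAt_cosh y)).sub (Real.hasDerivAt_sinh y)
      exact this.congr_deriv (by simp [id])
    rw [hd.deriv]
    exact mul_pos hy (Real.sinh_pos_iff.2 hy)
  have := hmono (Set.self_mem_Ici) (Set.mem_Ici.2 hx.le) hx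
  simp at this; linarith

private theorem sqrt_ratio_eq (R r K s : ℝ) (hR : 0 < R) (hr : 0 < r) (hs : s ≠ 0) :
    K * (Real.sqrt R / Real.sqrt r) *
      (Real.sqrt (2 / (Real.pi * r)) * Real.sinh r / (Real.sqrt (2 / (Real.pi * R)) * s)) =
    K * R / s * (Real.sinh r / r) := by
  rw [div_mul_eq_div_div, Real.sqrt_div (by positivity), div_mul_eq_div_div,
    Real.sqrt_div (by positivity)]
  have h2 : Real.sqrt (2 / Real.pi) ≠ 0 := Real.sqrt_ne_zero'.2 (by positivity)
  have hrr : Real.sqrt r ≠ 0 := by positivity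
  have hRR : Real.sqrt R ≠ 0 := by positivity
  have hr2 : Real.sqrt r * Real.sqrt r = r := Real.mul_self_sqrt hr.le
  have hR2 : Real.sqrt R * Real.sqrt R = R := Real.mul_self_sqrt hR.le
  field_simp
  rw [Real.sqrt_mul Real.pi_pos.le, Real.sqrt_div (by norm_num : (0:ℝ) ≤ 2)]
  have hpi : Real.sqrt Real.pi ≠ 0 := by positivity
  field_simp
  linear_combination (K * r) * hR2 - (K * R) * hr2

/-- `λ = σ_S''(R) + β·σ_S'(R)` equals
`[β·P₀(R)/(β + R·P₀(R))]·[R²·P₁(R) + 1 + β·R]`. -/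
theorem stmt17 (R β : ℝ) (hR : 0 < R) (hβ : 0 < β) :
    deriv (deriv (sigS R β)) R + β * deriv (sigS R β) R =
      (β * P 0 R / (β + R * P 0 R)) * (R ^ 2 * P 1 R + 1 + β * R) := by
  have hs : 0 < Real.sinh R := Real.sinh_pos_iff.2 hR
  have hcs : 0 < R * Real.cosh R - Real.sinh R := by linarith [sinh_lt_mul_cosh' R hR]
  have hq : Real.sqrt (2 / (Real.pi * R)) ≠ 0 := Real.sqrt_ne_zero'.2 (by positivity)
  have hP0 : P 0 R = (R * Real.cosh R - Real.sinh R) / (R ^ 2 * Real.sinh R) := by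
    simp only [P, besselIhalf, sbI]
    push_cast
    field_simp
    ring
  have hP1 : P 1 R = (R ^ 2 * Real.sinh R - 3 * R * Real.cosh R + 3 * Real.sinh R) /
      (R ^ 2 * (R * Real.cosh R - Real.sinh R)) := by
    have e2 : sbI 2 R = Real.sqrt (2 / (Real.pi * R)) * ((R * Real.cosh R - Real.sinh R) / R) := by
      simp only [sbI]; push_cast; field_simp; ring
    have e3 : sbI 3 R = Real.sqrt (2 / (Real.pi * R)) *
        ((R ^ 2 * Real.sinh R - 3 * R * Real.cosh R + 3 * Real.sinh R) / R ^ 2) := by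
      simp only [sbI]; push_cast; field_simp; ring
    simp only [P, besselIhalf]
    rw [e2, e3]
    field_simp
  set A : ℝ := β / (β + R * P 0 R) * R / Real.sinh R with hA
  set g : ℝ → ℝ := fun r => A * (Real.sinh r / r) with hg
  have heq : sigS R β =ᶠ[nhds R] g := by
    filter_upwards [Ioi_mem_nhds hR] with r hr
    simp only [sigS, besselIhalf, sbI, hg]
    exact sqrt_ratio_eq R r _ _ hR hr hs.ne'
  have hgd : ∀ r : ℝ, r ≠ 0 →
      HasDerivAt g (A * ((Real.cosh r * r - Real.sinh r * 1) / r ^ 2)) r := by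
    intro r hr
    exact HasDerivAt.const_mul A ((Real.hasDerivAt_sinh r).div (hasDerivAt_id r) hr)
  have hd1 : deriv (sigS R β) R = A * ((Real.cosh R * R - Real.sinh R * 1) / R ^ 2) := by
    rw [heq.deriv_eq]
    exact (hgd R hR.ne').deriv
  have hEd : deriv (sigS R β) =ᶠ[nhds R]
      fun r => A * ((Real.cosh r * r - Real.sinh r * 1) / r ^ 2) := by
    refine heq.deriv.trans ?_
    filter_upwards [compl_singleton_mem_nhds hR.ne'] with r hr
    exact (hgd r hr).deriv
  have hd2 : deriv (deriv (sigS R β)) R =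
      A * (((Real.sinh R * R + Real.cosh R * 1 - Real.cosh R * 1) * R ^ 2 -
        (Real.cosh R * R - Real.sinh R * 1) * (2 * R)) / (R ^ 2) ^ 2) := by
    rw [hEd.deriv_eq]
    have hnum : HasDerivAt (fun r => Real.cosh r * r - Real.sinh r * 1)
        (Real.sinh R * R + Real.cosh R * 1 - Real.cosh R * 1) R :=
      ((Real.hasDerivAt_cosh R).mul (hasDerivAt_id R)).sub ((Real.hasDerivAt_sinh R).mul_const 1)
    have hden : HasDerivAt (fun r : ℝ => r ^ 2) (2 * R) R := by
      simpa using hasDerivAt_pow 2 R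
    exact (HasDerivAt.const_mul A (hnum.div hden (by positivity))).deriv
  rw [hd1, hd2, hA, hP0, hP1]
  have hD : β + R * ((R * Real.cosh R - Real.sinh R) / (R ^ 2 * Real.sinh R)) ≠ 0 := by
    have h1 : 0 < (R * Real.cosh R - Real.sinh R) / (R ^ 2 * Real.sinh R) :=
      div_pos hcs (by positivity)
    nlinarith [mul_pos hR h1]
  field_simp
  ring
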